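/- Maintaining a linear skyline by the following insertion procedure preserves convexity: given an ordered list p¹, ..., pᴷ with strictly increasing first coordinates, strictly decreasing second coordinates, and consecutive triples in strictly convex position, inserting a new point q with q₁ > p^K₁ and q₂ < p^K₂, and then repeatedly removing p^K while {p^{K-1}, q} linearly dominates p^K (p^K lies on or above the segment from p^{K-1} to q), yields again a list with strictly increasing first coordinates, strictly decreasing second coordinates, and consecutive triples in strictly convex position. -/

import Mathlib

/-- A "good" linear-skyline list: strictly increasing first coordinates,
strictly decreasing second coordinates, and every three consecutive points in
strictly convex position. -/
def GoodChain (l : List (ℝ × ℝ)) : Prop :=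
  l.Chain' (fun a b => a.1 < b.1 ∧ b.2 < a.2) ∧
  ∀ a b c : ℝ × ℝ, [a, b, c] <:+: l →
    b.2 < a.2 + (c.2 - a.2) * (b.1 - a.1) / (c.1 - a.1)

/-- The removal loop of the insertion procedure, acting on the reversed list:
while the current last point `a` (head of the reversed list) lies on or above
the segment from its predecessor `b` to the new point `q` (i.e., `{b, q}`
linearly dominates `a`), remove it. -/
noncomputable def trimRev (q : ℝ × ℝ) : List (ℝ × ℝ) → List (ℝ × ℝ)
  | [] => []
  | [a] => [a]
  | a :: b :: rest =>
      if b.2 + (q.2 - b.2) * (a.1 - b.1) / (q.1 - b.1) ≤ a.2 then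
        trimRev q (b :: rest)
      else a :: b :: rest

lemma GoodChain.infix {l m : List (ℝ × ℝ)} (h : GoodChain l) (hm : m <:+: l) :
    GoodChain m :=
  ⟨h.1.infix hm, fun a b c h3 => h.2 a b c (h3.trans hm)⟩

lemma goodchain_append (m : List (ℝ × ℝ)) (hm : GoodChain m) (q : ℝ × ℝ)
    (hne : m ≠ [])
    (h1 : (m.getLast hne).1 < q.1) (h2 : q.2 < (m.getLast hne).2)
    (h3 : ∀ x y : ℝ × ℝ, [x, y] <:+ m →
      y.2 < x.2 + (q.2 - x.2) * (y.1 - x.1) / (q.1 - x.1)) :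
    GoodChain (m ++ [q]) := by
  constructor
  · rw [List.Chain', List.isChain_append]
    refine ⟨hm.1, List.isChain_singleton q, fun x hx y hy => ?_⟩
    rw [List.getLast?_eq_getLast hne, Option.mem_some_iff] at hx
    simp only [List.head?_cons, Option.mem_some_iff] at hy
    subst hx; subst hy
    exact ⟨h1, h2⟩
  · rintro a b c ⟨s, t, hst⟩
    rcases t.eq_nil_or_concat with rfl | ⟨t', u, rfl⟩
    · rw [List.append_nil] at hst
      have hst' : (s ++ [a, b]) ++ [c] = m ++ [q] := by
        simpa [List.append_assoc] using hst
      obtain ⟨h4, h5⟩ := List.append_inj' hst' rfl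
      have hc : c = q := by simpa using h5
      subst hc
      exact h3 a b ⟨s, h4⟩
    · have hst' : (s ++ [a, b, c] ++ t') ++ [u] = m ++ [q] := by
        simpa [List.append_assoc] using hst
      obtain ⟨h4, _⟩ := List.append_inj' hst' rfl
      exact hm.2 a b c ⟨s, t', h4⟩

lemma key (q : ℝ × ℝ) : ∀ (r : List (ℝ × ℝ)) (h : r ≠ []),
    GoodChain r.reverse → (r.head h).1 < q.1 → q.2 < (r.head h).2 →
    GoodChain ((trimRev q r).reverse ++ [q])
  | [], h => absurd rfl h
  | [a], _ => by
    intro _ hq1 hq2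
    simp only [List.head_cons] at hq1 hq2
    rw [trimRev]
    refine ⟨?_, ?_⟩
    · simp [List.Chain', List.isChain_cons_cons, hq1, hq2]
    · rintro x y z ⟨s, t, hst⟩
      simp only [List.reverse_singleton] at hst
      have := congrArg List.length hst
      simp [List.length_append] at this
      omega
  | a :: b :: rest, _ => by
    intro hg hq1 hq2
    simp only [List.head_cons] at hq1 hq2
    rw [trimRev]
    -- facts about the chain
    have hrev : (a :: b :: rest).reverse = (b :: rest).reverse ++ [a] := by
      simp
    have hchain : List.Chain' (fun x y : ℝ × ℝ => y.1 < x.1 ∧ x.2 < y.2)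
        (a :: b :: rest) := by
      have := hg.1
      rw [List.Chain', List.isChain_reverse] at this
      exact this
    have hba : b.1 < a.1 ∧ a.2 < b.2 := List.isChain_cons_cons.mp hchain |>.1
    split_ifs with hcond
    · -- dominated: recurse
      exact key q (b :: rest) (by simp)
        (hg.infix ⟨[], [a], by simp [hrev]⟩)
        (lt_trans hba.1 hq1) (lt_trans hq2 hba.2)
    · -- not dominated: append q
      push_neg at hcond
      refine goodchain_append _ hg q (by simp) ?_ ?_ ?_
      · rwa [List.getLast_reverse]
      · rwa [List.getLast_reverse]
      · rintro x y ⟨s, hs⟩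
        have hs' : y :: x :: s.reverse = a :: b :: rest := by
          have := congrArg List.reverse hs
          simpa using this
        obtain ⟨rfl, rfl, -⟩ : y = a ∧ x = b ∧ s.reverse = rest := by
          simpa using hs'
        exact hcond

/-- Inserting a new point `q` beyond the end of a good chain and repeatedly
removing the last point while it is linearly dominated by its predecessor
together with `q` yields again a good chain. -/
theorem insertion_preserves_convexity
    (l : List (ℝ × ℝ)) (hne : l ≠ []) (hgood : GoodChain l)
    (q : ℝ × ℝ)
    (hq1 : (l.getLast hne).1 < q.1)
    (hq2 : q.2 < (l.getLast hne).2) :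
    GoodChain ((trimRev q l.reverse).reverse ++ [q]) := by
  have hrne : l.reverse ≠ [] := by simpa using hne
  have hh : l.reverse.head hrne = l.getLast hne := List.head_reverse ..
  exact key q l.reverse hrne (by rwa [List.reverse_reverse]) (hh ▸ hq1) (hh ▸ hq2)
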